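/- Let X ∈ ℝ^{n×p}, let 𝓔 be a set of pairs (i,j) with 1 ≤ i < j ≤ n, and let A_𝓔 : ℝ^{n×p} → ℝ^{𝓔×p} be the linear map (A_𝓔 U)_{(i,j),k} = u_{i,k} − u_{j,k}. Let h : ℝ^{𝓔×p} → ℝ be closed convex, ν > 0, Λ ∈ ℝ^{𝓔×p}, set f(U) := (1/2)‖X − U‖²_F, and define φ₁(U) := f(U) + min_V { h(V) + ⟨Λ, V − A_𝓔 U⟩ + (ν/2)‖V − A_𝓔 U‖²_F }. Then ∇_U φ₁ is Lipschitz continuous with constant 1 + ν·λ_max(A_𝓔ᵀA_𝓔) with respect to the Frobenius norm: ‖∇φ₁(U₁) − ∇φ₁(U₂)‖_F ≤ (1 + ν·λ_max(A_𝓔ᵀA_𝓔))‖U₁ − U₂‖_F for all U₁, U₂ ∈ ℝ^{n×p}. -/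

import Mathlib

open scoped RealInnerProductSpace

set_option maxHeartbeats 2000000

section helpers

variable {H : Type*} [NormedAddCommGroup H] [InnerProductSpace ℝ H]

private lemma combo_norm_sq (u v : H) {a b : ℝ} (hab : a + b = 1) :
    ‖a • u + b • v‖ ^ 2 = a * ‖u‖ ^ 2 + b * ‖v‖ ^ 2 - a * b * ‖u - v‖ ^ 2 := by
  simp only [← real_inner_self_eq_norm_sq]
  simp only [inner_add_left, inner_add_right, inner_sub_left, inner_sub_right,
    real_inner_smul_left, real_inner_smul_right]
  linear_combination (a * ⟪u, u⟫ + b * ⟪v, v⟫) * hab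

private lemma deriv_le_sub' {k : ℝ → ℝ} {m : ℝ}
    (hk : ∀ t : ℝ, 0 ≤ t → t ≤ 1 → k t ≤ (1 - t) * k 0 + t * k 1)
    (hd : HasDerivAt k m 0) : m ≤ k 1 - k 0 := by
  have hs : Filter.Tendsto (slope k 0) (nhdsWithin 0 (Set.Ioi 0)) (nhds m) :=
    (hasDerivAt_iff_tendsto_slope.mp hd).mono_left
      (nhdsWithin_mono _ (fun x hx => ne_of_gt hx))
  refine le_of_tendsto hs ?_
  filter_upwards [Ioc_mem_nhdsGT (zero_lt_one (α := ℝ))] with t ht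
  have h1 := hk t ht.1.le ht.2
  rw [slope_def_field, sub_zero, div_le_iff₀ ht.1]
  nlinarith [h1, ht.1]

private lemma grad_convex_lower [CompleteSpace H] {ψ : H → ℝ} (hψ : ConvexOn ℝ Set.univ ψ)
    {x y gx : H} (hg : HasGradientAt ψ gx x) : ψ x + ⟪gx, y - x⟫ ≤ ψ y := by
  set d := y - x with hd
  have hline : HasDerivAt (fun t : ℝ => x + t • d) d 0 := by
    simpa using ((hasDerivAt_id (0 : ℝ)).smul_const d).const_add x
  have hcomp : HasDerivAt (fun t : ℝ => ψ (x + t • d)) ⟪gx, d⟫ 0 := by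
    have hF : HasFDerivAt ψ (InnerProductSpace.toDual ℝ H gx) x := hg.hasFDerivAt
    have hF' : HasFDerivAt ψ (InnerProductSpace.toDual ℝ H gx) (x + (0 : ℝ) • d) := by
      simpa using hF
    simpa [InnerProductSpace.toDual_apply_apply, Function.comp_def] using hF'.comp_hasDerivAt 0 hline
  have hk : ∀ t : ℝ, 0 ≤ t → t ≤ 1 →
      (fun s : ℝ => ψ (x + s • d)) t ≤ (1 - t) * (fun s : ℝ => ψ (x + s • d)) 0
        + t * (fun s : ℝ => ψ (x + s • d)) 1 := by
    intro t ht0 ht1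
    have hpt : x + t • d = (1 - t) • (x + (0 : ℝ) • d) + t • (x + (1 : ℝ) • d) := by
      module
    have := hψ.2 (Set.mem_univ (x + (0 : ℝ) • d)) (Set.mem_univ (x + (1 : ℝ) • d))
      (by linarith : (0 : ℝ) ≤ 1 - t) ht0 (by ring : (1 - t) + t = 1)
    simpa [hpt, smul_eq_mul] using this
  have hmain := deriv_le_sub' hk hcomp
  simp only [zero_smul, add_zero, one_smul, hd] at hmain
  have hxy : x + (y - x) = y := by abel
  rw [hxy] at hmain
  linarith

end helpers

/-- Let `X ∈ ℝ^{n×p}`, `𝓔` a set of pairs `(i,j)` with `i < j`, and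
`A_𝓔 : ℝ^{n×p} → ℝ^{𝓔×p}` the linear map `(A_𝓔 U)_{(i,j),k} = u_{i,k} − u_{j,k}`
(here called `T`). Let `h : ℝ^{𝓔×p} → ℝ` be closed convex, `ν > 0`, `Λ ∈ ℝ^{𝓔×p}`,
`f(U) := ½‖X − U‖²_F`, and
`φ₁(U) := f(U) + min_V { h(V) + ⟨Λ, V − A_𝓔 U⟩ + (ν/2)‖V − A_𝓔 U‖²_F }`.
Then `∇φ₁` is Lipschitz with constant `1 + ν·λ_max(A_𝓔ᵀA_𝓔)` in Frobenius norm.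
Matrices are modeled as Euclidean spaces indexed by entries (so the norm and the
trace inner product are the Euclidean ones); `μ = λ_max(A_𝓔ᵀA_𝓔)` is encoded as
an eigenvalue of `A_𝓔ᵀ ∘ A_𝓔` dominating all eigenvalues, and `φ'` is the
gradient of `φ₁`. -/
theorem statement10 {n p : ℕ}
    (𝓔 : Finset (Fin n × Fin n)) (h𝓔 : ∀ e ∈ 𝓔, e.1 < e.2)
    (X : EuclideanSpace ℝ (Fin n × Fin p))
    -- `T` is the linear map `A_𝓔`
    (T : EuclideanSpace ℝ (Fin n × Fin p) →ₗ[ℝ] EuclideanSpace ℝ (↥𝓔 × Fin p))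
    (hT : ∀ (U : EuclideanSpace ℝ (Fin n × Fin p)) (e : ↥𝓔) (k : Fin p),
      T U (e, k) = U ((e : Fin n × Fin n).1, k) - U ((e : Fin n × Fin n).2, k))
    (h : EuclideanSpace ℝ (↥𝓔 × Fin p) → ℝ)
    (hhconv : ConvexOn ℝ Set.univ h)
    (hhclosed : ∀ α : ℝ, IsClosed {V | h V ≤ α})
    (ν : ℝ) (hν : 0 < ν)
    (Λ : EuclideanSpace ℝ (↥𝓔 × Fin p))
    -- `μ` is the largest eigenvalue of `A_𝓔ᵀ A_𝓔`
    (μ : ℝ)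
    (hμ : Module.End.HasEigenvalue ((LinearMap.adjoint T).comp T) μ)
    (hμmax : ∀ c : ℝ, Module.End.HasEigenvalue ((LinearMap.adjoint T).comp T) c → c ≤ μ)
    -- `φ` is the function `φ₁`, with gradient `φ'`
    (φ : EuclideanSpace ℝ (Fin n × Fin p) → ℝ)
    (hφ : ∀ U, φ U = 1 / 2 * ‖X - U‖ ^ 2 + ⨅ V : EuclideanSpace ℝ (↥𝓔 × Fin p),
        (h V + ⟪Λ, V - T U⟫ + ν / 2 * ‖V - T U‖ ^ 2))
    (φ' : EuclideanSpace ℝ (Fin n × Fin p) → EuclideanSpace ℝ (Fin n × Fin p))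
    (hφ' : ∀ U, HasGradientAt φ (φ' U) U) :
    ∀ U₁ U₂, ‖φ' U₁ - φ' U₂‖ ≤ (1 + ν * μ) * ‖U₁ - U₂‖ := by
  classical
  -- Step 1: a linear lower bound for the convex function `h`
  obtain ⟨B, hB0, hBlow⟩ : ∃ B : ℝ, 0 ≤ B ∧
      ∀ V : EuclideanSpace ℝ (↥𝓔 × Fin p), -(B * (1 + ‖V‖)) ≤ h V := by
    have hcont : Continuous h := by
      have := hhconv.continuousOn isOpen_univ
      rwa [continuousOn_univ] at this
    obtain ⟨C, hC⟩ := (isCompact_closedBall (0 : EuclideanSpace ℝ (↥𝓔 × Fin p))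
      1).exists_bound_of_continuousOn hcont.continuousOn
    set M := max C 0 with hM
    have hM0 : 0 ≤ M := le_max_right C 0
    have hmB : ∀ u : EuclideanSpace ℝ (↥𝓔 × Fin p), ‖u‖ ≤ 1 → |h u| ≤ M := by
      intro u hu
      have := hC u (by simpa [Metric.mem_closedBall, dist_zero_right] using hu)
      exact le_trans (by simpa using this) (le_max_left C 0)
    refine ⟨2 * M, by positivity, ?_⟩
    intro V
    rcases le_or_gt ‖V‖ 1 with hV | hV
    · have h1 := abs_le.mp (hmB V hV)
      nlinarith [norm_nonneg V, h1.1]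
    · set t : ℝ := ‖V‖⁻¹ with htdef
      have hVpos : 0 < ‖V‖ := lt_trans zero_lt_one hV
      have ht0 : 0 < t := inv_pos.mpr hVpos
      have ht1 : t ≤ 1 := by rw [htdef]; exact inv_le_one_of_one_le₀ hV.le
      have htV : t * ‖V‖ = 1 := inv_mul_cancel₀ hVpos.ne'
      have hu : ‖t • V‖ ≤ 1 := by
        rw [norm_smul, Real.norm_eq_abs, abs_of_pos ht0, htV]
      have hconv := hhconv.2 (Set.mem_univ V) (Set.mem_univ (0 : EuclideanSpace ℝ (↥𝓔 × Fin p)))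
        ht0.le (by linarith : (0:ℝ) ≤ 1 - t) (by ring)
      simp only [smul_zero, add_zero, smul_eq_mul] at hconv
      have h1 := abs_le.mp (hmB (t • V) hu)
      have h2 := abs_le.mp (hmB 0 (by simp))
      have e2 : -(2 * M) ≤ h (t • V) - (1 - t) * h 0 := by
        nlinarith [h1.1, h2.1, h2.2, ht0, ht1]
      have e3 : -(2 * M) ≤ t * h V := by linarith
      have e4 : -(2 * M) * ‖V‖ ≤ h V := by
        have h5 := mul_le_mul_of_nonneg_right e3 (norm_nonneg V)
        have h6 : t * h V * ‖V‖ = h V := by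
          rw [mul_comm t (h V), mul_assoc, htV, mul_one]
        linarith [h6 ▸ h5]
      nlinarith [e4, hM0, norm_nonneg V]
  -- Step 2: properties of the partial minimum `g`
  obtain ⟨g, hgW, hgconv, hgconc⟩ :
      ∃ g : EuclideanSpace ℝ (↥𝓔 × Fin p) → ℝ,
        (∀ W, g W = ⨅ V : EuclideanSpace ℝ (↥𝓔 × Fin p),
            (h V + ⟪Λ, V - W⟫ + ν / 2 * ‖V - W‖ ^ 2)) ∧
        (∀ W₁ W₂ (a b : ℝ), 0 ≤ a → 0 ≤ b → a + b = 1 →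
          g (a • W₁ + b • W₂) ≤ a * g W₁ + b * g W₂) ∧
        (∀ W₁ W₂ (a b : ℝ), 0 ≤ a → 0 ≤ b → a + b = 1 →
          a * g W₁ + b * g W₂ - a * b * (ν / 2 * ‖W₁ - W₂‖ ^ 2) ≤ g (a • W₁ + b • W₂)) := by
    have hbdd : ∀ W : EuclideanSpace ℝ (↥𝓔 × Fin p),
        BddBelow (Set.range fun V => h V + ⟪Λ, V - W⟫ + ν / 2 * ‖V - W‖ ^ 2) := by
      intro W
      set c : ℝ := B + ‖Λ‖ with hc
      refine ⟨-B - B * ‖W‖ - c ^ 2 / (2 * ν), ?_⟩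
      rintro - ⟨V, rfl⟩
      have l1 := hBlow V
      have l2 : -(‖Λ‖ * ‖V - W‖) ≤ ⟪Λ, V - W⟫ := by
        have h1 := abs_real_inner_le_norm Λ (V - W)
        have := abs_le.mp h1
        linarith [this.1]
      have l3 : ‖V‖ ≤ ‖V - W‖ + ‖W‖ := by
        have := norm_add_le (V - W) W
        simpa using this
      have key : 0 ≤ ν / 2 * ‖V - W‖ ^ 2 - c * ‖V - W‖ + c ^ 2 / (2 * ν) := by
        have he : ν / 2 * ‖V - W‖ ^ 2 - c * ‖V - W‖ + c ^ 2 / (2 * ν)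
            = (ν * ‖V - W‖ - c) ^ 2 / (2 * ν) := by
          field_simp
          ring
        rw [he]
        positivity
      have l4 := mul_le_mul_of_nonneg_left l3 hB0
      simp only [hc] at key
      linarith [l1, l2, key, l4]
    refine ⟨fun W => ⨅ V : EuclideanSpace ℝ (↥𝓔 × Fin p),
        (h V + ⟪Λ, V - W⟫ + ν / 2 * ‖V - W‖ ^ 2), fun W => rfl, ?_, ?_⟩
    · -- convexity of `g`
      intro W₁ W₂ a b ha hb hab
      simp only []
      refine le_of_forall_sub_le ?_
      intro ε hε
      obtain ⟨V₁, hV₁⟩ := exists_lt_of_ciInf_lt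
        (show (⨅ V : EuclideanSpace ℝ (↥𝓔 × Fin p),
            (h V + ⟪Λ, V - W₁⟫ + ν / 2 * ‖V - W₁‖ ^ 2))
          < (⨅ V : EuclideanSpace ℝ (↥𝓔 × Fin p),
            (h V + ⟪Λ, V - W₁⟫ + ν / 2 * ‖V - W₁‖ ^ 2)) + ε / 2 by linarith)
      obtain ⟨V₂, hV₂⟩ := exists_lt_of_ciInf_lt
        (show (⨅ V : EuclideanSpace ℝ (↥𝓔 × Fin p),
            (h V + ⟪Λ, V - W₂⟫ + ν / 2 * ‖V - W₂‖ ^ 2))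
          < (⨅ V : EuclideanSpace ℝ (↥𝓔 × Fin p),
            (h V + ⟪Λ, V - W₂⟫ + ν / 2 * ‖V - W₂‖ ^ 2)) + ε / 2 by linarith)
      have hle : (⨅ V : EuclideanSpace ℝ (↥𝓔 × Fin p),
          (h V + ⟪Λ, V - (a • W₁ + b • W₂)⟫ + ν / 2 * ‖V - (a • W₁ + b • W₂)‖ ^ 2))
          ≤ h (a • V₁ + b • V₂) + ⟪Λ, (a • V₁ + b • V₂) - (a • W₁ + b • W₂)⟫
            + ν / 2 * ‖(a • V₁ + b • V₂) - (a • W₁ + b • W₂)‖ ^ 2 :=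
        ciInf_le (hbdd _) _
      have hsub : (a • V₁ + b • V₂) - (a • W₁ + b • W₂) = a • (V₁ - W₁) + b • (V₂ - W₂) := by
        rw [smul_sub, smul_sub]; abel
      have hconvh := hhconv.2 (Set.mem_univ V₁) (Set.mem_univ V₂) ha hb hab
      simp only [smul_eq_mul] at hconvh
      have hinner : ⟪Λ, a • (V₁ - W₁) + b • (V₂ - W₂)⟫
          = a * ⟪Λ, V₁ - W₁⟫ + b * ⟪Λ, V₂ - W₂⟫ := by
        simp only [inner_add_right, real_inner_smul_right]
      have hnorm := combo_norm_sq (V₁ - W₁) (V₂ - W₂) hab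
      have hnn : 0 ≤ a * b * ‖(V₁ - W₁) - (V₂ - W₂)‖ ^ 2 := by positivity
      rw [hsub, hinner, hnorm] at hle
      nlinarith [hle, hV₁, hV₂, hconvh, hnn, hν.le]
    · -- quadratic concavity of `g`
      intro W₁ W₂ a b ha hb hab
      simp only []
      refine le_ciInf ?_
      intro V
      have hid : h V + ⟪Λ, V - (a • W₁ + b • W₂)⟫ + ν / 2 * ‖V - (a • W₁ + b • W₂)‖ ^ 2
          = a * (h V + ⟪Λ, V - W₁⟫ + ν / 2 * ‖V - W₁‖ ^ 2)
            + b * (h V + ⟪Λ, V - W₂⟫ + ν / 2 * ‖V - W₂‖ ^ 2)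
            - a * b * (ν / 2 * ‖W₁ - W₂‖ ^ 2) := by
        have hsub : V - (a • W₁ + b • W₂) = a • (V - W₁) + b • (V - W₂) := by
          match_scalars <;> linarith
        have hnorm := combo_norm_sq (V - W₁) (V - W₂) hab
        have hdiff : (V - W₁) - (V - W₂) = W₂ - W₁ := by abel
        rw [hdiff] at hnorm
        rw [norm_sub_rev W₂ W₁] at hnorm
        have hinner : ⟪Λ, a • (V - W₁) + b • (V - W₂)⟫
            = a * ⟪Λ, V - W₁⟫ + b * ⟪Λ, V - W₂⟫ := by
          simp only [inner_add_right, real_inner_smul_right]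
        rw [hsub, hinner, hnorm]
        linear_combination (-(h V)) * hab
      rw [hid]
      have i1 : (⨅ V : EuclideanSpace ℝ (↥𝓔 × Fin p),
          (h V + ⟪Λ, V - W₁⟫ + ν / 2 * ‖V - W₁‖ ^ 2))
          ≤ h V + ⟪Λ, V - W₁⟫ + ν / 2 * ‖V - W₁‖ ^ 2 := ciInf_le (hbdd _) _
      have i2 : (⨅ V : EuclideanSpace ℝ (↥𝓔 × Fin p),
          (h V + ⟪Λ, V - W₂⟫ + ν / 2 * ‖V - W₂‖ ^ 2))
          ≤ h V + ⟪Λ, V - W₂⟫ + ν / 2 * ‖V - W₂‖ ^ 2 := ciInf_le (hbdd _) _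
      nlinarith [mul_le_mul_of_nonneg_left i1 ha, mul_le_mul_of_nonneg_left i2 hb]
  have hφg : ∀ U, φ U = 1 / 2 * ‖X - U‖ ^ 2 + g (T U) := by
    intro U
    rw [hφ U, hgW (T U)]
  -- Step 3: spectral bound
  have hsymm : ((LinearMap.adjoint T).comp T).IsSymmetric := by
    intro x y
    simp only [LinearMap.comp_apply]
    rw [LinearMap.adjoint_inner_left, LinearMap.adjoint_inner_right]
  have hSapp : ∀ u : EuclideanSpace ℝ (Fin n × Fin p),
      ⟪((LinearMap.adjoint T).comp T) u, u⟫ = ‖T u‖ ^ 2 := by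
    intro u
    simp only [LinearMap.comp_apply]
    rw [LinearMap.adjoint_inner_left, real_inner_self_eq_norm_sq]
  have hμ0 : 0 ≤ μ := by
    obtain ⟨v, hv⟩ := hμ.exists_hasEigenvector
    have h1 : ((LinearMap.adjoint T).comp T) v = μ • v := hv.apply_eq_smul
    have h2 : ‖T v‖ ^ 2 = μ * ‖v‖ ^ 2 := by
      rw [← hSapp v, h1, real_inner_smul_left, real_inner_self_eq_norm_sq]
    have h3 : 0 < ‖v‖ ^ 2 := by
      have hvn : 0 < ‖v‖ := norm_pos_iff.mpr hv.2
      positivity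
    nlinarith [sq_nonneg ‖T v‖]
  have hTsq : ∀ u : EuclideanSpace ℝ (Fin n × Fin p), ‖T u‖ ^ 2 ≤ μ * ‖u‖ ^ 2 := by
    intro u
    have hd : Module.finrank ℝ (EuclideanSpace ℝ (Fin n × Fin p))
        = Module.finrank ℝ (EuclideanSpace ℝ (Fin n × Fin p)) := rfl
    set S := (LinearMap.adjoint T).comp T with hS
    set bas := hsymm.eigenvectorBasis hd with hbas
    have hev : ∀ i, S (bas i) = hsymm.eigenvalues hd i • bas i := fun i =>
      hsymm.apply_eigenvectorBasis hd i
    have hevle : ∀ i, hsymm.eigenvalues hd i ≤ μ := fun i =>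
      hμmax _ (hsymm.hasEigenvalue_eigenvalues hd i)
    have p1 := bas.sum_inner_mul_inner (S u) u
    have p2 := bas.sum_inner_mul_inner u u
    have hterm : ∀ i, ⟪S u, bas i⟫ * ⟪bas i, u⟫
        = hsymm.eigenvalues hd i * (⟪u, bas i⟫ * ⟪bas i, u⟫) := by
      intro i
      rw [hsymm u (bas i), hev i, real_inner_smul_right]
      ring
    calc ‖T u‖ ^ 2 = ⟪S u, u⟫ := (hSapp u).symm
      _ = ∑ i, ⟪S u, bas i⟫ * ⟪bas i, u⟫ := p1.symm
      _ = ∑ i, hsymm.eigenvalues hd i * (⟪u, bas i⟫ * ⟪bas i, u⟫) := by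
          exact Finset.sum_congr rfl fun i _ => hterm i
      _ ≤ ∑ i, μ * (⟪u, bas i⟫ * ⟪bas i, u⟫) := by
          refine Finset.sum_le_sum fun i _ => ?_
          have hcomm : ⟪bas i, u⟫ = ⟪u, bas i⟫ := real_inner_comm _ _
          have hnn : 0 ≤ ⟪u, bas i⟫ * ⟪bas i, u⟫ := by
            rw [hcomm]; exact mul_self_nonneg _
          exact mul_le_mul_of_nonneg_right (hevle i) hnn
      _ = μ * ⟪u, u⟫ := by rw [← Finset.mul_sum, p2]
      _ = μ * ‖u‖ ^ 2 := by rw [real_inner_self_eq_norm_sq]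
  -- Step 4: convexity and smoothness of `φ`
  have hφconv : ConvexOn ℝ Set.univ φ := by
    refine ⟨convex_univ, ?_⟩
    intro x _ y _ a b ha hb hab
    simp only [smul_eq_mul]
    rw [hφg, hφg, hφg]
    have hX : X - (a • x + b • y) = a • (X - x) + b • (X - y) := by
      match_scalars <;> linarith
    have hN : ‖X - (a • x + b • y)‖ ^ 2
        = a * ‖X - x‖ ^ 2 + b * ‖X - y‖ ^ 2 - a * b * ‖(X - x) - (X - y)‖ ^ 2 := by
      rw [hX]; exact combo_norm_sq _ _ hab
    have hTm : T (a • x + b • y) = a • T x + b • T y := by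
      rw [map_add, map_smul, map_smul]
    have hg1 := hgconv (T x) (T y) a b ha hb hab
    rw [← hTm] at hg1
    nlinarith [hN, hg1, mul_nonneg (mul_nonneg ha hb) (sq_nonneg ‖(X - x) - (X - y)‖)]
  have hsmooth : ConvexOn ℝ Set.univ
      (fun U => (1 + ν * μ) / 2 * ‖U‖ ^ 2 - φ U) := by
    refine ⟨convex_univ, ?_⟩
    intro x _ y _ a b ha hb hab
    simp only [smul_eq_mul]
    rw [hφg, hφg, hφg]
    have hX : X - (a • x + b • y) = a • (X - x) + b • (X - y) := by
      match_scalars <;> linarith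
    have hN : ‖X - (a • x + b • y)‖ ^ 2
        = a * ‖X - x‖ ^ 2 + b * ‖X - y‖ ^ 2 - a * b * ‖(X - x) - (X - y)‖ ^ 2 := by
      rw [hX]; exact combo_norm_sq _ _ hab
    have hXd : (X - x) - (X - y) = y - x := by abel
    rw [hXd, norm_sub_rev y x] at hN
    have hM := combo_norm_sq x y hab
    have hTm : T (a • x + b • y) = a • T x + b • T y := by
      rw [map_add, map_smul, map_smul]
    have hg1 := hgconc (T x) (T y) a b ha hb hab
    rw [← hTm] at hg1
    have hTd : T x - T y = T (x - y) := (map_sub T x y).symm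
    rw [hTd] at hg1
    have hint : 0 ≤ a * b * (ν * (μ * ‖x - y‖ ^ 2 - ‖T (x - y)‖ ^ 2)) :=
      mul_nonneg (mul_nonneg ha hb)
        (mul_nonneg hν.le (by linarith [hTsq (x - y)]))
    rw [hM, hN]
    linarith [hg1, hint]
  -- Step 5: co-coercivity argument
  obtain ⟨L, hLdef⟩ : ∃ L : ℝ, L = 1 + ν * μ := ⟨_, rfl⟩
  rw [← hLdef] at hsmooth ⊢
  have hL0 : 0 < L := by rw [hLdef]; nlinarith
  have hgrad2 : ∀ U, HasGradientAt (fun W => L / 2 * ‖W‖ ^ 2 - φ W) (L • U - φ' U) U := by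
    intro U
    rw [hasGradientAt_iff_hasFDerivAt]
    have h1 := (hasFDerivAt_id U).inner ℝ (hasFDerivAt_id U)
    have h2 := h1.const_mul (L / 2)
    have h3 := h2.sub (hφ' U).hasFDerivAt
    have hfun : (fun W : EuclideanSpace ℝ (Fin n × Fin p) => L / 2 * ‖W‖ ^ 2 - φ W)
        = fun W => L / 2 * ⟪W, W⟫ - φ W := by
      funext W; rw [real_inner_self_eq_norm_sq]
    rw [hfun]
    refine h3.congr_fderiv ?_
    apply ContinuousLinearMap.ext
    intro v
    simp only [InnerProductSpace.toDual_apply_apply, ContinuousLinearMap.sub_apply,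
      ContinuousLinearMap.smul_apply, ContinuousLinearMap.comp_apply,
      ContinuousLinearMap.prod_apply, fderivInnerCLM_apply, ContinuousLinearMap.coe_id',
      id_eq, inner_sub_left, real_inner_smul_left, smul_eq_mul]
    rw [real_inner_comm v U]
    ring
  have descent : ∀ x y : EuclideanSpace ℝ (Fin n × Fin p),
      φ y ≤ φ x + ⟪φ' x, y - x⟫ + L / 2 * ‖y - x‖ ^ 2 := by
    intro x y
    have upp := grad_convex_lower hsmooth (hgrad2 x) (y := y)
    have e1 : ⟪L • x - φ' x, y - x⟫ = L * ⟪x, y⟫ - L * ⟪x, x⟫ - ⟪φ' x, y - x⟫ := by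
      simp only [inner_sub_left, inner_sub_right, real_inner_smul_left]
      ring
    have e2 : L / 2 * ‖y - x‖ ^ 2 = L / 2 * ‖y‖ ^ 2 - L * ⟪y, x⟫ + L / 2 * ‖x‖ ^ 2 := by
      rw [norm_sub_sq_real]; ring
    have e3 : L * ⟪x, x⟫ = L * ‖x‖ ^ 2 := by rw [real_inner_self_eq_norm_sq]
    have e4 : L * ⟪x, y⟫ = L * ⟪y, x⟫ := by rw [real_inner_comm x y]
    rw [e1] at upp
    linarith [upp, e2, e3, e4]
  have star : ∀ x y : EuclideanSpace ℝ (Fin n × Fin p),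
      φ x + ⟪φ' x, y - x⟫ + 1 / (2 * L) * ‖φ' x - φ' y‖ ^ 2 ≤ φ y := by
    intro x y
    set z := y - L⁻¹ • (φ' y - φ' x) with hz
    have low := grad_convex_lower hφconv (hφ' x) (y := z)
    have upp := descent y z
    have hzy : z - y = -(L⁻¹ • (φ' y - φ' x)) := by rw [hz]; abel
    have hnz : ‖z - y‖ = L⁻¹ * ‖φ' y - φ' x‖ := by
      rw [hzy, norm_neg, norm_smul, Real.norm_eq_abs, abs_of_pos (inv_pos.mpr hL0)]
    have hzx : z - x = (y - x) + (z - y) := by abel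
    have e5 : ⟪φ' x, z - x⟫ = ⟪φ' x, y - x⟫ - L⁻¹ * ⟪φ' x, φ' y - φ' x⟫ := by
      rw [hzx, inner_add_right, hzy, inner_neg_right, real_inner_smul_right]
      ring
    have e6 : ⟪φ' y, z - y⟫ = -(L⁻¹ * ⟪φ' y, φ' y - φ' x⟫) := by
      rw [hzy, inner_neg_right, real_inner_smul_right]
    have e7 : ⟪φ' y, φ' y - φ' x⟫ - ⟪φ' x, φ' y - φ' x⟫ = ‖φ' y - φ' x‖ ^ 2 := by
      rw [← inner_sub_left, real_inner_self_eq_norm_sq]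
    have e8 : L / 2 * ‖z - y‖ ^ 2 = 1 / (2 * L) * ‖φ' y - φ' x‖ ^ 2 := by
      rw [hnz]
      field_simp
    have e9 : ‖φ' x - φ' y‖ = ‖φ' y - φ' x‖ := norm_sub_rev _ _
    have e10 : L⁻¹ * ⟪φ' y, φ' y - φ' x⟫ - L⁻¹ * ⟪φ' x, φ' y - φ' x⟫
        = L⁻¹ * ‖φ' y - φ' x‖ ^ 2 := by rw [← mul_sub, e7]
    have e11 : L⁻¹ * ‖φ' y - φ' x‖ ^ 2 = 2 * (1 / (2 * L) * ‖φ' y - φ' x‖ ^ 2) := by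
      field_simp
    rw [e5] at low
    rw [e6, e8] at upp
    rw [e9]
    linarith [low, upp, e10, e11]
  intro U₁ U₂
  have s1 := star U₁ U₂
  have s2 := star U₂ U₁
  have e12 : ‖φ' U₂ - φ' U₁‖ = ‖φ' U₁ - φ' U₂‖ := norm_sub_rev _ _
  rw [e12] at s2
  have e13 : ⟪φ' U₁, U₂ - U₁⟫ + ⟪φ' U₂, U₁ - U₂⟫
      = -⟪φ' U₁ - φ' U₂, U₁ - U₂⟫ := by
    simp only [inner_sub_left, inner_sub_right]
    ring
  have key : 1 / L * ‖φ' U₁ - φ' U₂‖ ^ 2 ≤ ⟪φ' U₁ - φ' U₂, U₁ - U₂⟫ := by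
    have hsum := add_le_add s1 s2
    have e14 : (1:ℝ) / (2 * L) + 1 / (2 * L) = 1 / L := by
      rw [div_add_div _ _ (by positivity : (2*L) ≠ 0) (by positivity : (2*L) ≠ 0),
        div_eq_div_iff (by positivity : (2*L)*(2*L) ≠ 0) hL0.ne']
      ring
    have e14' : 1 / (2 * L) * ‖φ' U₁ - φ' U₂‖ ^ 2 + 1 / (2 * L) * ‖φ' U₁ - φ' U₂‖ ^ 2
        = 1 / L * ‖φ' U₁ - φ' U₂‖ ^ 2 := by rw [← add_mul, e14]
    linarith [hsum, e13, e14']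
  have cs := real_inner_le_norm (φ' U₁ - φ' U₂) (U₁ - U₂)
  rcases eq_or_lt_of_le (norm_nonneg (φ' U₁ - φ' U₂)) with h0 | h0
  · rw [← h0]
    positivity
  · have h1 : ‖φ' U₁ - φ' U₂‖ ^ 2 ≤ L * (‖φ' U₁ - φ' U₂‖ * ‖U₁ - U₂‖) := by
      have h2 := mul_le_mul_of_nonneg_left (le_trans key cs) hL0.le
      have h3 : L * (1 / L * ‖φ' U₁ - φ' U₂‖ ^ 2) = ‖φ' U₁ - φ' U₂‖ ^ 2 := by
        field_simp
      linarith [h3 ▸ h2]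
    nlinarith [h1, h0]
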